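/- With L, d, D as above, let S ⊆ L with |S| ≥ 2 and x ∉ S. Then D(S ∪ {x}) ≤ D(S) + max_{y ∈ L \ S} min_{l ∈ S} d(y, l). -/

import Mathlib

open Finset

noncomputable def dmin {L : Type*} [DecidableEq L] (d : L → L → ℝ) (x : L) (T : Finset L) : ℝ :=
  sInf ((T.image (d x) : Finset ℝ) : Set ℝ)

noncomputable def aggDiv {L : Type*} [DecidableEq L] (d : L → L → ℝ) (S : Finset L) : ℝ :=
  ∑ l ∈ S, dmin d l (S.erase l)

lemma dmin_anti {L : Type*} [DecidableEq L] (d : L → L → ℝ) (x : L) {T T' : Finset L}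
    (hT : T.Nonempty) (h : T ⊆ T') : dmin d x T' ≤ dmin d x T := by
  apply csInf_le_csInf
  · exact (T'.image (d x)).finite_toSet.bddBelow
  · exact_mod_cast (hT.image _)
  · exact_mod_cast Finset.image_subset_image h

theorem stmt9 {L : Type*} [Fintype L] [DecidableEq L] (d : L → L → ℝ)
    (hsym : ∀ a b, d a b = d b a) (hnn : ∀ a b, 0 ≤ d a b)
    (S : Finset L) (hS : 2 ≤ S.card) (x : L) (hx : x ∉ S) :
    aggDiv d (insert x S) ≤
      aggDiv d S + sSup ((Sᶜ.image (fun y => dmin d y S) : Finset ℝ) : Set ℝ) := by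
  have h1 : aggDiv d (insert x S)
      = dmin d x S + ∑ l ∈ S, dmin d l ((insert x S).erase l) := by
    rw [aggDiv, Finset.sum_insert hx, Finset.erase_insert hx]
  rw [h1, add_comm, aggDiv]
  gcongr with l hl
  · rw [Finset.erase_insert_of_ne (by rintro rfl; exact hx hl)]
    apply dmin_anti
    · rw [← Finset.card_pos, Finset.card_erase_of_mem hl]
      omega
    · exact Finset.subset_insert _ _
  · apply le_csSup ((Sᶜ.image _).finite_toSet.bddAbove)
    exact_mod_cast Finset.mem_image_of_mem _ (Finset.mem_compl.mpr hx)
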